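/- Let p ≥ 2, n ≥ 1, and (d_{ij})_{1≤i≠j≤p} nonnegative integers with d_{ij}=d_{ji}. With d_{ij}(σ) as the number of agreement points of σ_i and σ_j for σ ∈ {Id}×S_n^{p-1}, we have #{σ : ∀ i≠j, d_{ij}(σ) ≥ d_{ij}} ≤ (n!)^{p-1} / (∏_{1≤i≠j≤p} d_{ij}!)^{1/p}. -/

import Mathlib

open scoped Classical


lemma fixes_card_le (n : ℕ) (T : Finset (Fin n)) :
    (Finset.univ.filter (fun π : Equiv.Perm (Fin n) => ∀ u ∈ T, π u = u)).card
      ≤ (n - T.card).factorial := by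
  classical
  have hstab : ∀ π : Equiv.Perm (Fin n), (∀ u ∈ T, π u = u) → ∀ x : Fin n, x ∉ T ↔ π x ∉ T := by
    intro π hπ x
    constructor
    · intro hx hpx
      have h1 : π (π x) = π x := hπ _ hpx
      have h2 : π x = x := π.injective h1
      exact hx (h2 ▸ hpx)
    · intro hpx hx
      exact hpx (by rw [hπ x hx]; exact hx)
  set g : Equiv.Perm (Fin n) → Equiv.Perm {x : Fin n // x ∉ T} :=
    fun π => if h : ∀ u ∈ T, π u = u then π.subtypePerm (fun x => (hstab π h x).symm) else 1 with hg
  have hinj : Set.InjOn g (Finset.univ.filter (fun π : Equiv.Perm (Fin n) => ∀ u ∈ T, π u = u)) := by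
    intro π1 h1 π2 h2 heq
    simp only [Finset.coe_filter, Set.mem_setOf_eq, Finset.mem_univ, true_and] at h1 h2
    rw [hg] at heq
    simp only [dif_pos h1, dif_pos h2] at heq
    apply Equiv.ext
    intro x
    by_cases hx : x ∈ T
    · rw [h1 x hx, h2 x hx]
    · have := congrArg (fun e => (e ⟨x, hx⟩ : {x : Fin n // x ∉ T})) heq
      simpa [Equiv.Perm.subtypePerm] using congrArg Subtype.val this
  calc (Finset.univ.filter (fun π : Equiv.Perm (Fin n) => ∀ u ∈ T, π u = u)).card
      ≤ (Finset.univ : Finset (Equiv.Perm {x : Fin n // x ∉ T})).card := by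
        apply Finset.card_le_card_of_injOn g (fun _ _ => Finset.mem_univ _) hinj
    _ = (n - T.card).factorial := by
        rw [Finset.card_univ, Fintype.card_perm]
        congr 1
        rw [Fintype.card_subtype_compl, Fintype.card_fin, Fintype.card_coe]

lemma fix_count_core (n k : ℕ) :
    (Finset.univ.filter (fun π : Equiv.Perm (Fin n) =>
        k ≤ (Finset.univ.filter (fun u : Fin n => π u = u)).card)).card * k.factorial
      ≤ n.factorial := by
  classical
  have hsub : (Finset.univ.filter (fun π : Equiv.Perm (Fin n) =>
        k ≤ (Finset.univ.filter (fun u : Fin n => π u = u)).card))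
      ⊆ (Finset.powersetCard k (Finset.univ : Finset (Fin n))).biUnion
          (fun T => Finset.univ.filter (fun π : Equiv.Perm (Fin n) => ∀ u ∈ T, π u = u)) := by
    intro π hπ
    simp only [Finset.mem_filter, Finset.mem_univ, true_and] at hπ
    obtain ⟨T, hT, hTcard⟩ := Finset.exists_subset_card_eq hπ
    refine Finset.mem_biUnion.2 ⟨T, ?_, ?_⟩
    · exact Finset.mem_powersetCard.2 ⟨Finset.subset_univ _, hTcard⟩
    · simp only [Finset.mem_filter, Finset.mem_univ, true_and]
      intro u hu
      have := hT hu
      simpa using (Finset.mem_filter.1 this).2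
  have h1 : (Finset.univ.filter (fun π : Equiv.Perm (Fin n) =>
        k ≤ (Finset.univ.filter (fun u : Fin n => π u = u)).card)).card
      ≤ n.choose k * (n - k).factorial := by
    calc _ ≤ _ := Finset.card_le_card hsub
      _ ≤ ∑ T ∈ Finset.powersetCard k (Finset.univ : Finset (Fin n)),
            (Finset.univ.filter (fun π : Equiv.Perm (Fin n) => ∀ u ∈ T, π u = u)).card :=
          Finset.card_biUnion_le
      _ ≤ ∑ T ∈ Finset.powersetCard k (Finset.univ : Finset (Fin n)), (n - k).factorial := by
          apply Finset.sum_le_sum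
          intro T hT
          have := fixes_card_le n T
          rwa [(Finset.mem_powersetCard.1 hT).2] at this
      _ = n.choose k * (n - k).factorial := by
          rw [Finset.sum_const, Finset.card_powersetCard, Finset.card_univ, Fintype.card_fin,
            smul_eq_mul]
  by_cases hk : k ≤ n
  · calc _ ≤ (n.choose k * (n - k).factorial) * k.factorial :=
        Nat.mul_le_mul_right _ h1
      _ = n.choose k * k.factorial * (n - k).factorial := by ring
      _ = n.factorial := Nat.choose_mul_factorial_mul_factorial hk
  · have : (Finset.univ.filter (fun π : Equiv.Perm (Fin n) =>
        k ≤ (Finset.univ.filter (fun u : Fin n => π u = u)).card)) = ∅ := by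
      apply Finset.filter_false_of_mem
      intro π _
      push_neg
      calc (Finset.univ.filter (fun u : Fin n => π u = u)).card
          ≤ (Finset.univ : Finset (Fin n)).card := Finset.card_filter_le _ _
        _ = n := by simp
        _ < k := by omega
    rw [this]
    simpa using Nat.one_le_iff_ne_zero.1 n.factorial_pos

lemma fix_count (n k : ℕ) (f : Equiv.Perm (Fin n) → Equiv.Perm (Fin n))
    (hf : Function.Injective f) :
    (Finset.univ.filter (fun ρ : Equiv.Perm (Fin n) =>
        k ≤ (Finset.univ.filter (fun u : Fin n => (f ρ) u = u)).card)).card * k.factorial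
      ≤ n.factorial := by
  classical
  refine le_trans (Nat.mul_le_mul_right _ ?_) (fix_count_core n k)
  calc (Finset.univ.filter (fun ρ : Equiv.Perm (Fin n) =>
        k ≤ (Finset.univ.filter (fun u : Fin n => (f ρ) u = u)).card)).card
      = ((Finset.univ.filter (fun ρ : Equiv.Perm (Fin n) =>
        k ≤ (Finset.univ.filter (fun u : Fin n => (f ρ) u = u)).card)).image f).card :=
        (Finset.card_image_of_injective _ hf).symm
    _ ≤ _ := by
        apply Finset.card_le_card
        intro π hπ
        obtain ⟨ρ, hρ, rfl⟩ := Finset.mem_image.1 hπ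
        simp only [Finset.mem_filter, Finset.mem_univ, true_and] at hρ ⊢
        exact hρ

lemma fix_count' (n k : ℕ) (f : Equiv.Perm (Fin n) → Equiv.Perm (Fin n))
    (hf : Function.Injective f) :
    (Finset.univ.filter (fun ρ : Equiv.Perm (Fin n) =>
        k ≤ (Finset.univ.filter (fun u : Fin n => (f ρ) u = u)).card)).card
      ≤ n.factorial / k.factorial :=
  (Nat.le_div_iff_mul_le k.factorial_pos).2 (fix_count n k f hf)

lemma peel {p n : ℕ} (d : Fin p → Fin p → ℕ) (c : Fin p)
    (A : Finset (Fin p → Equiv.Perm (Fin n)))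
    (hA : ∀ σ ∈ A, ∀ i, i ≠ c →
      d c i ≤ (Finset.univ.filter (fun u : Fin n => (σ i * (σ c)⁻¹) u = u)).card)
    (F : Finset (Fin p)) (hcF : c ∉ F) :
    A.card ≤ (∏ i ∈ F, n.factorial / (d c i).factorial) *
      (A.image (fun σ i => if i ∈ F then 1 else σ i)).card := by
  classical
  induction F using Finset.induction_on with
  | empty =>
      simp only [Finset.notMem_empty, if_false, Finset.prod_empty, one_mul]
      have : (A.image (fun σ i => σ i)) = A := Finset.image_id'
      rw [this]
  | @insert a F haF ih =>
      have hc : c ∉ F := fun h => hcF (Finset.mem_insert_of_mem h)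
      have hac : a ≠ c := fun h => hcF (h ▸ Finset.mem_insert_self a F)
      refine le_trans (ih hc) ?_
      rw [Finset.prod_insert haF]
      have key : (A.image (fun σ i => if i ∈ F then 1 else σ i)).card
          ≤ (n.factorial / (d c a).factorial) *
            (A.image (fun σ i => if i ∈ insert a F then 1 else σ i)).card := by
        have hcomp : (A.image (fun σ i => if i ∈ F then 1 else σ i)).image
              (fun σ i => if i = a then 1 else σ i)
            = A.image (fun σ i => if i ∈ insert a F then 1 else σ i) := by
          rw [Finset.image_image]
          congr 1
          funext σ
          funext i
          by_cases h1 : i = a <;> by_cases h2 : i ∈ F <;>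
            simp [Function.comp, h1, h2, Finset.mem_insert]
        rw [← hcomp]
        apply Finset.card_le_mul_card_image
        intro b hb
        have hfib : ∀ σ' ∈ (A.image (fun σ i => if i ∈ F then 1 else σ i)).filter
              (fun σ' => (fun i => if i = a then 1 else σ' i) = b),
            σ' a ∈ Finset.univ.filter (fun ρ : Equiv.Perm (Fin n) =>
              d c a ≤ (Finset.univ.filter (fun u : Fin n => (ρ * (b c)⁻¹) u = u)).card) := by
          intro σ' hσ'
          obtain ⟨hσ'1, hσ'2⟩ := Finset.mem_filter.1 hσ'
          obtain ⟨σ, hσA, rfl⟩ := Finset.mem_image.1 hσ'1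
          have hbc : b c = σ c := by
            rw [← hσ'2]
            simp [hac.symm, hc]
          simp only [Finset.mem_filter, Finset.mem_univ, true_and]
          rw [hbc]
          convert hA σ hσA a hac using 2
          ext u
          rw [Finset.mem_filter, Finset.mem_filter]
          simp [haF]
        have hinj : Set.InjOn (fun σ' : Fin p → Equiv.Perm (Fin n) => σ' a)
            ((A.image (fun σ i => if i ∈ F then 1 else σ i)).filter
              (fun σ' => (fun i => if i = a then 1 else σ' i) = b)) := by
          intro x hx y hy hxy
          simp only [Finset.coe_filter, Set.mem_setOf_eq] at hx hy
          funext i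
          by_cases hia : i = a
          · rw [hia]; exact hxy
          · have h1 := congrFun hx.2 i
            have h2 := congrFun hy.2 i
            simp only [if_neg hia] at h1 h2
            rw [h1, h2]
        calc ((A.image (fun σ i => if i ∈ F then 1 else σ i)).filter
              (fun σ' => (fun i => if i = a then 1 else σ' i) = b)).card
            ≤ (Finset.univ.filter (fun ρ : Equiv.Perm (Fin n) =>
              d c a ≤ (Finset.univ.filter (fun u : Fin n => (ρ * (b c)⁻¹) u = u)).card)).card :=
              Finset.card_le_card_of_injOn _ hfib hinj
          _ ≤ n.factorial / (d c a).factorial :=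
              fix_count' n (d c a) (fun ρ => ρ * (b c)⁻¹) (mul_left_injective _)
      calc (∏ i ∈ F, n.factorial / (d c i).factorial) *
            (A.image (fun σ i => if i ∈ F then 1 else σ i)).card
          ≤ (∏ i ∈ F, n.factorial / (d c i).factorial) *
            ((n.factorial / (d c a).factorial) *
              (A.image (fun σ i => if i ∈ insert a F then 1 else σ i)).card) :=
            Nat.mul_le_mul_left _ key
        _ = (n.factorial / (d c a).factorial * ∏ i ∈ F, n.factorial / (d c i).factorial) *
              (A.image (fun σ i => if i ∈ insert a F then 1 else σ i)).card := by ring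

/-- Counting bound (Theorem "usable"): the number of tuples `σ ∈ {Id} × S_n^{p-1}`
with `d_{ij}(σ) ≥ d_{ij}` for all `i ≠ j` is at most
`(n!)^{p-1} / (∏_{i≠j} d_{ij}!)^{1/p}`. -/
theorem stmt6 (p n : ℕ) (hp : 2 ≤ p) (hn : 1 ≤ n)
    (d : Fin p → Fin p → ℕ) (hsym : ∀ i j, d i j = d j i) :
    ((Finset.univ.filter (fun σ : Fin p → Equiv.Perm (Fin n) =>
        σ ⟨0, by omega⟩ = 1 ∧ ∀ i j, i ≠ j →
          d i j ≤ (Finset.univ.filter (fun u : Fin n => (σ j * (σ i)⁻¹) u = u)).card)).card : ℝ)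
      ≤ ((n.factorial : ℝ)) ^ (p - 1) /
        (∏ ij ∈ Finset.univ.filter (fun ij : Fin p × Fin p => ij.1 ≠ ij.2),
            (((d ij.1 ij.2).factorial : ℝ))) ^ ((1 : ℝ) / p) := by
  classical
  set z0 : Fin p := ⟨0, by omega⟩ with hz0
  set A : Finset (Fin p → Equiv.Perm (Fin n)) :=
    Finset.univ.filter (fun σ : Fin p → Equiv.Perm (Fin n) =>
        σ z0 = 1 ∧ ∀ i j, i ≠ j →
          d i j ≤ (Finset.univ.filter (fun u : Fin n => (σ j * (σ i)⁻¹) u = u)).card) with hAdef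
  have hAmem : ∀ σ ∈ A, σ z0 = 1 ∧ ∀ i j, i ≠ j →
      d i j ≤ (Finset.univ.filter (fun u : Fin n => (σ j * (σ i)⁻¹) u = u)).card := by
    intro σ hσ
    exact (Finset.mem_filter.1 hσ).2
  -- choose the maximizing center
  set Rn : Fin p → ℕ := fun c => ∏ i ∈ Finset.univ.erase c, (d c i).factorial with hRn
  obtain ⟨c, -, hcmax⟩ := Finset.exists_max_image (Finset.univ : Finset (Fin p)) Rn
    ⟨z0, Finset.mem_univ _⟩
  have hA : ∀ σ ∈ A, ∀ i, i ≠ c →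
      d c i ≤ (Finset.univ.filter (fun u : Fin n => (σ i * (σ c)⁻¹) u = u)).card := by
    intro σ hσ i hi
    exact (hAmem σ hσ).2 c i (fun h => hi h.symm)
  -- star counting bound
  have hcard : A.card ≤ ∏ i ∈ Finset.univ.erase c, n.factorial / (d c i).factorial := by
    by_cases hc : c = z0
    · have h1 := peel d c A hA (Finset.univ.erase c) (Finset.notMem_erase _ _)
      have h2 : (A.image (fun σ i => if i ∈ Finset.univ.erase c then 1 else σ i)).card ≤ 1 := by
        apply Finset.card_le_one.2
        intro a ha b hb
        obtain ⟨σ, hσ, rfl⟩ := Finset.mem_image.1 ha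
        obtain ⟨τ, hτ, rfl⟩ := Finset.mem_image.1 hb
        funext i
        by_cases hi : i ∈ Finset.univ.erase c
        · simp [hi]
        · have hic : i = c := by
            by_contra h
            exact hi (Finset.mem_erase.2 ⟨h, Finset.mem_univ _⟩)
          subst hic
          have e1 : σ i = 1 := by rw [hc]; exact (hAmem σ hσ).1
          have e2 : τ i = 1 := by rw [hc]; exact (hAmem τ hτ).1
          simp [hi, e1, e2]
      calc A.card ≤ _ := h1
        _ ≤ (∏ i ∈ Finset.univ.erase c, n.factorial / (d c i).factorial) * 1 :=
            Nat.mul_le_mul_left _ h2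
        _ = _ := mul_one _
    · -- c ≠ z0
      set F : Finset (Fin p) := (Finset.univ.erase c).erase z0 with hF
      have hcF : c ∉ F := fun h => Finset.notMem_erase c _ (Finset.mem_of_mem_erase h)
      have h1 := peel d c A hA F hcF
      -- second stage : forget coordinate c
      have h2 : (A.image (fun σ i => if i ∈ F then 1 else σ i)).card
          ≤ (n.factorial / (d c z0).factorial) *
            ((A.image (fun σ i => if i ∈ F then 1 else σ i)).image
              (fun σ i => if i = c then 1 else σ i)).card := by
        apply Finset.card_le_mul_card_image
        intro b hb
        have hfib : ∀ σ' ∈ (A.image (fun σ i => if i ∈ F then 1 else σ i)).filter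
              (fun σ' => (fun i => if i = c then 1 else σ' i) = b),
            σ' c ∈ Finset.univ.filter (fun ρ : Equiv.Perm (Fin n) =>
              d c z0 ≤ (Finset.univ.filter (fun u : Fin n => ρ⁻¹ u = u)).card) := by
          intro σ' hσ'
          obtain ⟨hσ'1, hσ'2⟩ := Finset.mem_filter.1 hσ'
          obtain ⟨σ, hσA, rfl⟩ := Finset.mem_image.1 hσ'1
          simp only [Finset.mem_filter, Finset.mem_univ, true_and]
          have hcon := (hAmem σ hσA).2 c z0 hc
          rw [(hAmem σ hσA).1] at hcon
          simpa [hcF] using hcon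
        have hinj : Set.InjOn (fun σ' : Fin p → Equiv.Perm (Fin n) => σ' c)
            ((A.image (fun σ i => if i ∈ F then 1 else σ i)).filter
              (fun σ' => (fun i => if i = c then 1 else σ' i) = b)) := by
          intro x hx y hy hxy
          simp only [Finset.coe_filter, Set.mem_setOf_eq] at hx hy
          funext i
          by_cases hic : i = c
          · rw [hic]; exact hxy
          · have e1 := congrFun hx.2 i
            have e2 := congrFun hy.2 i
            simp only [if_neg hic] at e1 e2
            rw [e1, e2]
        calc ((A.image (fun σ i => if i ∈ F then 1 else σ i)).filter
              (fun σ' => (fun i => if i = c then 1 else σ' i) = b)).card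
            ≤ (Finset.univ.filter (fun ρ : Equiv.Perm (Fin n) =>
              d c z0 ≤ (Finset.univ.filter (fun u : Fin n => ρ⁻¹ u = u)).card)).card :=
              Finset.card_le_card_of_injOn _ hfib hinj
          _ ≤ n.factorial / (d c z0).factorial :=
              fix_count' n (d c z0) (fun ρ => ρ⁻¹) inv_injective
      have h3 : ((A.image (fun σ i => if i ∈ F then 1 else σ i)).image
              (fun σ i => if i = c then 1 else σ i)).card ≤ 1 := by
        apply Finset.card_le_one.2
        intro a ha b hb
        obtain ⟨σ', hσ'1, rfl⟩ := Finset.mem_image.1 ha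
        obtain ⟨τ', hτ'1, rfl⟩ := Finset.mem_image.1 hb
        obtain ⟨σ, hσ, rfl⟩ := Finset.mem_image.1 hσ'1
        obtain ⟨τ, hτ, rfl⟩ := Finset.mem_image.1 hτ'1
        funext i
        by_cases hic : i = c
        · simp [hic]
        · by_cases hiF : i ∈ F
          · simp [hic, hiF]
          · have hiz : i = z0 := by
              by_contra h
              exact hiF (Finset.mem_erase.2 ⟨h, Finset.mem_erase.2 ⟨hic, Finset.mem_univ _⟩⟩)
            subst hiz
            simp [hic, hiF, (hAmem σ hσ).1, (hAmem τ hτ).1]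
      have hz0mem : z0 ∈ Finset.univ.erase c :=
        Finset.mem_erase.2 ⟨Ne.symm hc, Finset.mem_univ _⟩
      have hins : insert z0 F = Finset.univ.erase c := by
        rw [hF, Finset.insert_erase hz0mem]
      calc A.card ≤ _ := h1
        _ ≤ (∏ i ∈ F, n.factorial / (d c i).factorial) *
              ((n.factorial / (d c z0).factorial) * 1) := by
            apply Nat.mul_le_mul_left
            calc _ ≤ _ := h2
              _ ≤ (n.factorial / (d c z0).factorial) * 1 := Nat.mul_le_mul_left _ h3
        _ = (n.factorial / (d c z0).factorial) * ∏ i ∈ F, n.factorial / (d c i).factorial := by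
            ring
        _ = ∏ i ∈ insert z0 F, n.factorial / (d c i).factorial := by
            rw [Finset.prod_insert (fun h => (Finset.notMem_erase z0 _) h)]
        _ = _ := by rw [hins]
  -- pass to the reals
  have hcast : (A.card : ℝ) ≤ (n.factorial : ℝ) ^ (p - 1) / (Rn c : ℝ) := by
    calc (A.card : ℝ) ≤ ((∏ i ∈ Finset.univ.erase c, n.factorial / (d c i).factorial : ℕ) : ℝ) :=
        Nat.cast_le.2 hcard
      _ = ∏ i ∈ Finset.univ.erase c, ((n.factorial / (d c i).factorial : ℕ) : ℝ) := by
          rw [Nat.cast_prod]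
      _ ≤ ∏ i ∈ Finset.univ.erase c, (n.factorial : ℝ) / ((d c i).factorial : ℝ) := by
          apply Finset.prod_le_prod
          · intro i _; positivity
          · intro i _; exact Nat.cast_div_le
      _ = (∏ _i ∈ Finset.univ.erase c, (n.factorial : ℝ)) /
            (∏ i ∈ Finset.univ.erase c, ((d c i).factorial : ℝ)) := by
          rw [Finset.prod_div_distrib]
      _ = (n.factorial : ℝ) ^ (p - 1) / (Rn c : ℝ) := by
          rw [Finset.prod_const, Finset.card_erase_of_mem (Finset.mem_univ _),
            Finset.card_univ, Fintype.card_fin, hRn, Nat.cast_prod]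
  refine le_trans hcast ?_
  -- compare denominators
  set P : ℝ := ∏ ij ∈ Finset.univ.filter (fun ij : Fin p × Fin p => ij.1 ≠ ij.2),
      (((d ij.1 ij.2).factorial : ℝ)) with hP
  have hPpos : 0 < P := by
    apply Finset.prod_pos
    intro ij _
    exact_mod_cast (d ij.1 ij.2).factorial_pos
  have hProws : P = ∏ c' : Fin p, (Rn c' : ℝ) := by
    rw [hP, Finset.prod_filter]
    rw [Fintype.prod_prod_type]
    apply Finset.prod_congr rfl
    intro c' _
    rw [hRn]
    push_cast
    rw [← Finset.prod_filter]
    congr 1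
    exact Finset.filter_ne _ _
  have hRpos : (0:ℝ) < (Rn c : ℝ) := by
    have : 0 < Rn c := Finset.prod_pos (fun i _ => (d c i).factorial_pos)
    exact_mod_cast this
  have hPle : P ≤ ((Rn c : ℝ)) ^ p := by
    rw [hProws]
    calc ∏ c' : Fin p, (Rn c' : ℝ) ≤ ∏ _c' : Fin p, (Rn c : ℝ) := by
          apply Finset.prod_le_prod
          · intro i _; positivity
          · intro i _; exact_mod_cast hcmax i (Finset.mem_univ _)
      _ = (Rn c : ℝ) ^ p := by
          rw [Finset.prod_const, Finset.card_univ, Fintype.card_fin]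
  have hroot : P ^ ((1:ℝ)/p) ≤ (Rn c : ℝ) := by
    calc P ^ ((1:ℝ)/p) ≤ (((Rn c : ℝ)) ^ p) ^ ((1:ℝ)/p) :=
        Real.rpow_le_rpow hPpos.le hPle (by positivity)
      _ = (Rn c : ℝ) := by
        rw [← Real.rpow_natCast ((Rn c : ℝ)) p, ← Real.rpow_mul hRpos.le,
          mul_one_div, div_self (by exact_mod_cast (by omega : p ≠ 0)), Real.rpow_one]
  apply div_le_div_of_nonneg_left (by positivity) (Real.rpow_pos_of_pos hPpos _) hroot
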